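/- Interior closed-form solution of the two-task EMGD problem: let g₁, g₂ be vectors in a real inner product space and σ₁, σ₂ > 0 with σ₂ g₁ ≠ σ₁ g₂. If σ₁⟨g₂, g₂⟩ ≥ σ₂⟨g₁, g₂⟩ and σ₂⟨g₁, g₁⟩ ≥ σ₁⟨g₁, g₂⟩, then the pair λ₁* = (σ₁⟨g₂, g₂⟩ − σ₂⟨g₁, g₂⟩)/‖σ₂ g₁ − σ₁ g₂‖² and λ₂* = (σ₂⟨g₁, g₁⟩ − σ₁⟨g₁, g₂⟩)/‖σ₂ g₁ − σ₁ g₂‖² satisfies λ₁* ≥ 0, λ₂* ≥ 0, λ₁*σ₁ + λ₂*σ₂ = 1, and minimizes ‖λ₁ g₁ + λ₂ g₂‖² over all (λ₁, λ₂) with λ₁ ≥ 0, λ₂ ≥ 0 and λ₁σ₁ + λ₂σ₂ = 1. -/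

import Mathlib

open RealInnerProductSpace

/-- interior closed-form solution of the two-task EMGD problem: if
`σ₂ • g₁ ≠ σ₁ • g₂`, `σ₁⟪g₂, g₂⟫ ≥ σ₂⟪g₁, g₂⟫` and `σ₂⟪g₁, g₁⟫ ≥ σ₁⟪g₁, g₂⟫`, then
`λ₁* = (σ₁⟪g₂, g₂⟫ - σ₂⟪g₁, g₂⟫)/‖σ₂ • g₁ - σ₁ • g₂‖²` and
`λ₂* = (σ₂⟪g₁, g₁⟫ - σ₁⟪g₁, g₂⟫)/‖σ₂ • g₁ - σ₁ • g₂‖²` form a feasible pair minimizing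
`‖λ₁ • g₁ + λ₂ • g₂‖²` over all nonnegative `(λ₁, λ₂)` with `λ₁σ₁ + λ₂σ₂ = 1`. -/
theorem stmt_13 {H : Type*} [NormedAddCommGroup H] [InnerProductSpace ℝ H]
    (g₁ g₂ : H) (σ₁ σ₂ : ℝ) (hσ₁ : 0 < σ₁) (hσ₂ : 0 < σ₂)
    (hne : σ₂ • g₁ ≠ σ₁ • g₂)
    (h₁ : σ₂ * ⟪g₁, g₂⟫ ≤ σ₁ * ⟪g₂, g₂⟫)
    (h₂ : σ₁ * ⟪g₁, g₂⟫ ≤ σ₂ * ⟪g₁, g₁⟫)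
    (lam₁star lam₂star : ℝ)
    (hl₁ : lam₁star = (σ₁ * ⟪g₂, g₂⟫ - σ₂ * ⟪g₁, g₂⟫) / ‖σ₂ • g₁ - σ₁ • g₂‖ ^ 2)
    (hl₂ : lam₂star = (σ₂ * ⟪g₁, g₁⟫ - σ₁ * ⟪g₁, g₂⟫) / ‖σ₂ • g₁ - σ₁ • g₂‖ ^ 2) :
    0 ≤ lam₁star ∧ 0 ≤ lam₂star ∧ lam₁star * σ₁ + lam₂star * σ₂ = 1 ∧
    ∀ lam₁ lam₂ : ℝ, 0 ≤ lam₁ → 0 ≤ lam₂ → lam₁ * σ₁ + lam₂ * σ₂ = 1 →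
      ‖lam₁star • g₁ + lam₂star • g₂‖ ^ 2 ≤ ‖lam₁ • g₁ + lam₂ • g₂‖ ^ 2 := by
  set w : H := σ₂ • g₁ - σ₁ • g₂ with hw
  set D : ℝ := ‖w‖ ^ 2 with hDdef
  have hDpos : 0 < D := by
    have hwne : w ≠ 0 := sub_ne_zero.mpr hne
    exact pow_pos (norm_pos_iff.mpr hwne) 2
  have hDne : D ≠ 0 := ne_of_gt hDpos
  have hD : D = σ₂ * σ₂ * ⟪g₁, g₁⟫ - 2 * σ₁ * σ₂ * ⟪g₁, g₂⟫ + σ₁ * σ₁ * ⟪g₂, g₂⟫ := by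
    have : D = ⟪w, w⟫ := (real_inner_self_eq_norm_sq w).symm
    rw [this, hw]
    simp only [inner_sub_left, inner_sub_right, real_inner_smul_left, real_inner_smul_right,
      real_inner_comm g₂ g₁]
    ring
  have h1' : 0 ≤ lam₁star := by
    rw [hl₁]
    exact div_nonneg (by linarith) (le_of_lt hDpos)
  have h2' : 0 ≤ lam₂star := by
    rw [hl₂]
    exact div_nonneg (by linarith) (le_of_lt hDpos)
  have hsum : lam₁star * σ₁ + lam₂star * σ₂ = 1 := by
    rw [hl₁, hl₂]
    field_simp
    linarith [hD]
  refine ⟨h1', h2', hsum, ?_⟩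
  intro lam₁ lam₂ _ _ hc
  set t : ℝ := (lam₁ - lam₁star) / σ₂ with ht
  have hlam₁ : lam₁ = lam₁star + t * σ₂ := by
    rw [ht, div_mul_cancel₀ _ (ne_of_gt hσ₂)]
    ring
  have hlam₂ : lam₂ = lam₂star - t * σ₁ := by
    have : (lam₁ - lam₁star) * σ₁ = (lam₂star - lam₂) * σ₂ := by linarith
    rw [ht]
    field_simp
    nlinarith [this]
  have hvec : lam₁ • g₁ + lam₂ • g₂ = (lam₁star • g₁ + lam₂star • g₂) + t • w := by
    rw [hlam₁, hlam₂, hw]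
    module
  have hortho : ⟪lam₁star • g₁ + lam₂star • g₂, w⟫ = 0 := by
    rw [hw]
    simp only [inner_add_left, inner_sub_right, real_inner_smul_left, real_inner_smul_right,
      real_inner_comm g₂ g₁]
    rw [hl₁, hl₂]
    field_simp
    rw [real_inner_comm g₂ g₁]
    ring
  rw [hvec]
  have hexp : ‖(lam₁star • g₁ + lam₂star • g₂) + t • w‖ ^ 2
      = ‖lam₁star • g₁ + lam₂star • g₂‖ ^ 2 + 2 * ⟪lam₁star • g₁ + lam₂star • g₂, t • w⟫
        + ‖t • w‖ ^ 2 := by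
    rw [@norm_add_sq_real]
  rw [hexp, real_inner_smul_right, hortho]
  have : 0 ≤ ‖t • w‖ ^ 2 := by positivity
  linarith
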